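/- Let p be a prime, H a finite p-group, and m, n positive integers. Let α : F_p[H]^m → F_p[H]^n be a homomorphism of left F_p[H]-modules, and let ᾱ : F_p^m → F_p^n be the induced F_p-linear map obtained by applying the augmentation homomorphism (equivalently, ᾱ = id_{F_p} ⊗_{F_p[H]} α, where F_p carries the trivial H-action). Then dim_{F_p}(im(α)) ≥ |H| · dim_{F_p}(im(ᾱ)), where dim_{F_p}(im(α)) is the dimension of the image of α viewed as an F_p-linear map between F_p-vector spaces of dimensions m·|H| and n·|H|. -/

import Mathlib

open MonoidAlgebra

section Aux

variable {p : ℕ} [Fact p.Prime] {H : Type} [Group H] [Fintype H]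

noncomputable def liftPi {a b : ℕ}
    (f : (Fin a → ZMod p) →ₗ[ZMod p] (Fin b → ZMod p)) :
    (Fin a → MonoidAlgebra (ZMod p) H) →ₗ[MonoidAlgebra (ZMod p) H]
      (Fin b → MonoidAlgebra (ZMod p) H) :=
  ∑ i : Fin a, (LinearMap.proj i).smulRight
    (fun j => algebraMap (ZMod p) (MonoidAlgebra (ZMod p) H) (f (Pi.single i 1) j))

lemma liftPi_compat {a b : ℕ} (f : (Fin a → ZMod p) →ₗ[ZMod p] (Fin b → ZMod p))
    (ε : MonoidAlgebra (ZMod p) H →ₐ[ZMod p] ZMod p)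
    (v : Fin a → MonoidAlgebra (ZMod p) H) (j : Fin b) :
    ε (liftPi f v j) = f (fun i => ε (v i)) j := by
  classical
  have hv : (fun i => ε (v i)) = ∑ i : Fin a, ε (v i) • (Pi.single i (1 : ZMod p) : Fin a → ZMod p) := by
    ext i
    simp [Finset.sum_apply, Pi.single_apply]
  have hone : ∀ c : ZMod p, ε (MonoidAlgebra.single (1 : H) c) = c := by
    intro c
    have : MonoidAlgebra.single (1 : H) c
        = algebraMap (ZMod p) (MonoidAlgebra (ZMod p) H) c := by
      rw [MonoidAlgebra.coe_algebraMap]; simp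
    rw [this, AlgHom.commutes]; simp
  rw [hv, map_sum]
  simp [liftPi, LinearMap.sum_apply, Finset.sum_apply, map_sum, map_mul,
    AlgHom.commutes, smul_eq_mul, hone]


noncomputable def sigmaH (p : ℕ) (H : Type) [Group H] [Fintype H] :
    MonoidAlgebra (ZMod p) H :=
  ∑ h : H, MonoidAlgebra.single h 1

lemma sigmaH_apply (g : H) : (sigmaH p H).coeff g = 1 := by
  classical
  rw [sigmaH, MonoidAlgebra.coeff_sum, Finset.sum_apply']
  simp [MonoidAlgebra.coeff_single, Finsupp.single_apply]

lemma sigmaH_ne_zero : sigmaH p H ≠ 0 := by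
  intro h
  have := sigmaH_apply (p := p) (g := (1 : H))
  rw [h] at this
  simp at this

lemma sigmaH_mul_single (g : H) (c : ZMod p) :
    sigmaH p H * MonoidAlgebra.single g c = c • sigmaH p H := by
  classical
  rw [sigmaH, Finset.sum_mul, Finset.smul_sum]
  rw [Fintype.sum_equiv (Equiv.mulRight g)
    (fun h => MonoidAlgebra.single h (1 : ZMod p) * MonoidAlgebra.single g c)
    (fun h => c • MonoidAlgebra.single h (1 : ZMod p))]
  intro h
  simp [MonoidAlgebra.single_mul_single, Finsupp.smul_single]

lemma sigmaH_mul (ε : MonoidAlgebra (ZMod p) H →ₐ[ZMod p] ZMod p)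
    (hε : ε = MonoidAlgebra.lift (ZMod p) (ZMod p) H 1)
    (x : MonoidAlgebra (ZMod p) H) :
    sigmaH p H * x = ε x • sigmaH p H := by
  classical
  conv_lhs => rw [← x.sum_coeff_single]
  rw [Finsupp.sum, Finset.mul_sum]
  have hx : ε x = ∑ g ∈ x.coeff.support, x.coeff g := by
    rw [hε, MonoidAlgebra.lift_apply]
    simp [Finsupp.sum]
  rw [hx, Finset.sum_smul]
  exact Finset.sum_congr rfl fun g _ => sigmaH_mul_single g (x.coeff g)

lemma fixed_eq_smul_sigmaH (x : MonoidAlgebra (ZMod p) H)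
    (hx : ∀ h : H, MonoidAlgebra.single h (1 : ZMod p) * x = x) :
    x = x.coeff 1 • sigmaH p H := by
  classical
  have hg : ∀ g : H, x.coeff g = x.coeff 1 := by
    intro g
    have h1 := congrArg (fun y : MonoidAlgebra (ZMod p) H => y.coeff g) (hx g)
    simp only [MonoidAlgebra.coeff_single_mul_apply, one_mul, inv_mul_cancel] at h1
    exact h1.symm
  ext g
  rw [MonoidAlgebra.coeff_smul, Finsupp.smul_apply, sigmaH_apply, smul_eq_mul, mul_one, hg g]

end Aux

set_option maxHeartbeats 1000000 in
theorem stmt8 (p : ℕ) [Fact p.Prime] (H : Type) [Group H] [Finite H]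
    (hH : IsPGroup p H) (m n : ℕ) (hm : 0 < m) (hn : 0 < n)
    (α : (Fin m → MonoidAlgebra (ZMod p) H) →ₗ[MonoidAlgebra (ZMod p) H]
      (Fin n → MonoidAlgebra (ZMod p) H))
    (ε : MonoidAlgebra (ZMod p) H →ₐ[ZMod p] ZMod p)
    (hε : ε = MonoidAlgebra.lift (ZMod p) (ZMod p) H 1)
    (αbar : (Fin m → ZMod p) →ₗ[ZMod p] (Fin n → ZMod p))
    (hαbar : ∀ v : Fin m → MonoidAlgebra (ZMod p) H,
      αbar (fun i => ε (v i)) = fun j => ε (α v j)) :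
    Nat.card H * Module.finrank (ZMod p) (LinearMap.range αbar) ≤
      Module.finrank (ZMod p) ((LinearMap.range α).restrictScalars (ZMod p)) := by
  classical
  letI : Fintype H := Fintype.ofFinite H
  set R := MonoidAlgebra (ZMod p) H with hR
  set W := LinearMap.range αbar with hW
  set r := Module.finrank (ZMod p) W with hrdef
  let b : Module.Basis (Fin r) (ZMod p) W := Module.finBasis (ZMod p) W
  choose u hu using fun j : Fin r => LinearMap.mem_range.mp (b j).2
  let ι : (Fin r → ZMod p) →ₗ[ZMod p] (Fin m → ZMod p) :=
    (Pi.basisFun (ZMod p) (Fin r)).constr (ZMod p) u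
  obtain ⟨g, hg⟩ := W.subtype.exists_leftInverse_of_injective W.ker_subtype
  let π : (Fin n → ZMod p) →ₗ[ZMod p] (Fin r → ZMod p) :=
    (b.equivFun.toLinearMap) ∘ₗ g
  have key : ∀ x : Fin r → ZMod p, π (αbar (ι x)) = x := by
    intro x
    have h1 : αbar (ι x) = W.subtype (b.equivFun.symm x) := by
      rw [Module.Basis.constr_apply_fintype, map_sum, Module.Basis.equivFun_symm_apply, map_sum]
      refine Finset.sum_congr rfl fun i _ => ?_
      rw [map_smul, map_smul, hu i]
      simp
    have h2 : g (W.subtype (b.equivFun.symm x)) = b.equivFun.symm x := by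
      have := congrArg (fun f => f (b.equivFun.symm x)) hg
      simpa using this
    simp only [π, h1, LinearMap.comp_apply, h2, LinearEquiv.coe_coe]
    exact b.equivFun.apply_symm_apply x
  let φ : (Fin r → R) →ₗ[R] (Fin r → R) := liftPi π ∘ₗ α ∘ₗ liftPi ι
  have hφε : ∀ (v : Fin r → R) (j : Fin r), ε (φ v j) = ε (v j) := by
    intro v j
    show ε (liftPi π (α (liftPi ι v)) j) = _
    rw [liftPi_compat]
    have h3 : (fun i => ε (liftPi ι v i)) = ι (fun i' => ε (v i')) := by
      ext i; rw [liftPi_compat]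
    have h2 : (fun i => ε (α (liftPi ι v) i)) = αbar (fun i => ε (liftPi ι v i)) := by
      rw [hαbar]
    rw [h2, h3, key]
  haveI hRfin : Finite R := by
    have h : Finite (H →₀ ZMod p) := inferInstance
    exact Finite.of_injective (fun x : R => x.coeff) MonoidAlgebra.coeff_injective
  have hinj : Function.Injective φ := by
    rw [← LinearMap.ker_eq_bot]
    by_contra hk
    set K := LinearMap.ker φ with hK
    letI : MulAction H K :=
      { smul := fun h v => ⟨MonoidAlgebra.of (ZMod p) H h • v.1, K.smul_mem _ v.2⟩
        one_smul := fun v => Subtype.ext (by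
          show MonoidAlgebra.of (ZMod p) H 1 • v.1 = v.1
          rw [map_one, one_smul])
        mul_smul := fun g' h v => Subtype.ext (by
          show MonoidAlgebra.of (ZMod p) H (g' * h) • v.1
            = MonoidAlgebra.of (ZMod p) H g' • MonoidAlgebra.of (ZMod p) H h • v.1
          rw [map_mul, mul_smul]) }
    have h0 : (0 : K) ∈ MulAction.fixedPoints H K := by
      intro h
      exact Subtype.ext (by
        show MonoidAlgebra.of (ZMod p) H h • (0 : Fin r → R) = 0
        rw [smul_zero])
    have hpd : p ∣ Nat.card K := by
      obtain ⟨v0, hv0K, hv0⟩ := Submodule.exists_mem_ne_zero_of_ne_bot hk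
      set x : K := ⟨v0, hv0K⟩ with hxd
      have hxne : x ≠ 0 := by
        intro h
        exact hv0 (by simpa [hxd] using congrArg Subtype.val h)
      have hps : p • x = 0 := by
        apply Subtype.ext
        have : ((p • x : K) : Fin r → R) = p • v0 := by
          simp [hxd]
        rw [this]
        show p • v0 = (0 : Fin r → R)
        rw [← Nat.cast_smul_eq_nsmul (ZMod p) p v0, ZMod.natCast_self, zero_smul]
      have hdvd := addOrderOf_dvd_of_nsmul_eq_zero hps
      have hp : p.Prime := Fact.out
      rcases (Nat.Prime.eq_one_or_self_of_dvd hp _ hdvd) with h1 | h1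
      · exact absurd ((AddMonoid.addOrderOf_eq_one_iff).mp h1) hxne
      · have := addOrderOf_dvd_natCard x
        rwa [h1] at this
    obtain ⟨v, hvfix, hvne⟩ :=
      hH.exists_fixed_point_of_prime_dvd_card_of_fixed_point K hpd h0
    -- each component of v.1 is H-fixed
    have hcomp : ∀ i : Fin r, (v.1 i : R) = (v.1 i).coeff 1 • sigmaH p H := by
      intro i
      refine fixed_eq_smul_sigmaH _ (fun h => ?_)
      have := congrArg (fun w : K => (w.1 i : R)) (hvfix h)
      exact this
    set c : Fin r → ZMod p := fun i => (v.1 i).coeff 1 with hc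
    set uu : Fin r → R := fun i => algebraMap (ZMod p) R (c i) with huu
    have hx : v.1 = sigmaH p H • uu := by
      funext i
      have h1 : (sigmaH p H • uu) i = sigmaH p H * uu i := rfl
      have h2 : uu i = MonoidAlgebra.single (1 : H) (c i) := by
        show algebraMap (ZMod p) R (c i) = _
        rw [MonoidAlgebra.coe_algebraMap]
        simp
      rw [h1, h2, sigmaH_mul_single]
      exact hcomp i
    have h5 : φ v.1 = 0 := v.2
    have h6 : sigmaH p H • φ uu = 0 := by rw [← map_smul, ← hx, h5]
    have hc0 : c = 0 := by
      funext i
      have h7 : sigmaH p H * φ uu i = 0 := by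
        have := congrFun h6 i
        simpa using this
      rw [sigmaH_mul ε hε] at h7
      have h8 : ε (φ uu i) = 0 := by
        rcases smul_eq_zero.mp h7 with h | h
        · exact h
        · exact absurd h sigmaH_ne_zero
      rw [hφε] at h8
      rw [huu] at h8
      simpa using (ε.commutes (c i)).symm.trans h8
    apply hvne
    refine Subtype.ext ?_
    show (0 : Fin r → R) = v.1
    rw [hx]
    have h12 : uu = 0 := by
      funext i
      have hci : c i = 0 := congrFun hc0 i
      show algebraMap (ZMod p) R (c i) = 0
      rw [hci, map_zero]
    rw [h12, smul_zero]
  have hsurj : Function.Surjective φ :=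
    Finite.injective_iff_surjective.mp hinj
  -- counting
  let bR : Module.Basis H (ZMod p) R := MonoidAlgebra.basis H (ZMod p)
  letI : Module.Finite (ZMod p) R := Module.Finite.of_basis bR
  have hfinR : Module.finrank (ZMod p) R = Fintype.card H :=
    Module.finrank_eq_card_basis bR
  let Pi' : (Fin n → R) →ₗ[ZMod p] (Fin r → R) := (liftPi π).restrictScalars (ZMod p)
  set V : Submodule (ZMod p) (Fin n → R) := (LinearMap.range α).restrictScalars (ZMod p)
    with hV
  have htop : Submodule.map Pi' V = ⊤ := by
    rw [eq_top_iff]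
    rintro w -
    obtain ⟨v, hv⟩ := hsurj w
    refine Submodule.mem_map.mpr ⟨α (liftPi ι v), ?_, hv⟩
    rw [hV, Submodule.restrictScalars_mem]
    exact ⟨liftPi ι v, rfl⟩
  have h11 : Module.finrank (ZMod p) (Fin r → R) = r * Fintype.card H := by
    rw [Module.finrank_pi_fintype (ZMod p)]
    simp [hfinR, Finset.sum_const, mul_comm]
  have h10 : r * Fintype.card H ≤ Module.finrank (ZMod p) V := by
    calc r * Fintype.card H = Module.finrank (ZMod p) (Fin r → R) := h11.symm
      _ = Module.finrank (ZMod p) (⊤ : Submodule (ZMod p) (Fin r → R)) :=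
        (finrank_top _ _).symm
      _ = Module.finrank (ZMod p) (Submodule.map Pi' V) := by rw [htop]
      _ ≤ Module.finrank (ZMod p) V := Submodule.finrank_map_le _ _
  rw [Nat.card_eq_fintype_card]
  calc Fintype.card H * r = r * Fintype.card H := mul_comm _ _
    _ ≤ Module.finrank (ZMod p) V := h10
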